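/- If ‖r‖ = 1, then ‖∇_r F(r,θ)‖ ≥ 4·F(r,θ), where ∇_r F = (∂F/∂r₁, …, ∂F/∂r_d) denotes the gradient of F in the radial variables. -/

import Mathlib

open Matrix Complex
open scoped Classical

noncomputable section

/-- Single-qubit Pauli matrices: `0 ↦ I`, `1 ↦ X`, `2 ↦ Y`, `3 ↦ Z`. -/
def pauli1 (a : Fin 4) : Matrix (Fin 2) (Fin 2) ℂ :=
  if a = 0 then 1
  else if a = 1 then !![0, 1; 1, 0]
  else if a = 2 then !![0, -Complex.I; Complex.I, 0]
  else !![1, 0; 0, -1]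

/-- The `n`-qubit Pauli string `σ^{(1)} ⊗ ⋯ ⊗ σ^{(n)}` associated to `s : Fin n → Fin 4`,
realized as a matrix on the `(Fin n → Fin 2)`-indexed space of dimension `2^n`. -/
def pauliOp {n : ℕ} (s : Fin n → Fin 4) :
    Matrix (Fin n → Fin 2) (Fin n → Fin 2) ℂ :=
  Matrix.of fun i j => ∏ k, pauli1 (s k) (i k) (j k)

/-- `G₁`: the off-diagonal Pauli strings (some factor is `X` or `Y`). -/
def G1 (n : ℕ) : Finset (Fin n → Fin 4) :=
  Finset.univ.filter fun s => ∃ k, s k = 1 ∨ s k = 2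

/-- The diagonal Pauli strings (every factor is `I` or `Z`). -/
def DiagStrings (n : ℕ) : Finset (Fin n → Fin 4) :=
  Finset.univ.filter fun s => ∀ k, s k = 0 ∨ s k = 3

variable {n d : ℕ}

/-- `K(r,θ) = Σ_j r_j e^{iθ_j} P_j`. -/
def Kmat (P : Fin d → Fin n → Fin 4) (x : (Fin d → ℝ) × (Fin d → ℝ)) :
    Matrix (Fin n → Fin 2) (Fin n → Fin 2) ℂ :=
  ∑ j, ((x.1 j : ℂ) * Complex.exp (Complex.I * (x.2 j : ℂ))) • pauliOp (P j)

/-- The cost function `f(r,θ) = Σ_{P ∈ G₁} tr(K(r,θ)† H K(r,θ) P)²` (the traces being real). -/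
def costf (H : Matrix (Fin n → Fin 2) (Fin n → Fin 2) ℂ)
    (P : Fin d → Fin n → Fin 4) (x : (Fin d → ℝ) × (Fin d → ℝ)) : ℝ :=
  ∑ Q ∈ G1 n, (((Kmat P x)ᴴ * H * Kmat P x * pauliOp Q).trace.re) ^ 2

/-- `φ_P(r,θ) = 2^{-n} tr(K(r,θ)† K(r,θ) P)` (real). -/
def phi (P : Fin d → Fin n → Fin 4) (Q : Fin n → Fin 4)
    (x : (Fin d → ℝ) × (Fin d → ℝ)) : ℝ :=
  (1 / 2 ^ n) * ((Kmat P x)ᴴ * Kmat P x * pauliOp Q).trace.re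

/-- `G₂`: non-identity Pauli strings `Q` with `P_i P_j ∈ {Q, -Q, iQ, -iQ}` for some `i, j`. -/
def G2 (P : Fin d → Fin n → Fin 4) : Finset (Fin n → Fin 4) :=
  Finset.univ.filter fun Q => Q ≠ (fun _ => 0) ∧ ∃ i j : Fin d, ∃ c : ℂ,
    (c = 1 ∨ c = -1 ∨ c = Complex.I ∨ c = -Complex.I) ∧
    pauliOp (P i) * pauliOp (P j) = c • pauliOp Q

/-- The total cost function `F = f + Σ_{P ∈ G₂} φ_P²`. -/
def totalF (H : Matrix (Fin n → Fin 2) (Fin n → Fin 2) ℂ)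
    (P : Fin d → Fin n → Fin 4) (x : (Fin d → ℝ) × (Fin d → ℝ)) : ℝ :=
  costf H P x + ∑ Q ∈ G2 P, phi P Q x ^ 2

end

section Aux

namespace Stmt16

variable {n d : ℕ}

noncomputable def cfun (x : (Fin d → ℝ) × (Fin d → ℝ)) (j : Fin d) : ℂ :=
  (x.1 j : ℂ) * Complex.exp (Complex.I * (x.2 j : ℂ))

lemma trace_expand {m : Type*} [Fintype m] [DecidableEq m] (a : Fin d → ℂ)
    (B : Fin d → Matrix m m ℂ) (M Q : Matrix m m ℂ) :
    ((∑ i, a i • B i)ᴴ * M * (∑ j, a j • B j) * Q).trace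
      = ∑ i, ∑ j, (starRingEnd ℂ) (a i) * a j * ((B i)ᴴ * M * B j * Q).trace := by
  rw [Finset.sum_comm]
  simp only [Matrix.conjTranspose_sum, Matrix.conjTranspose_smul, Matrix.sum_mul,
    Matrix.mul_sum, Matrix.smul_mul, Matrix.mul_smul, Matrix.trace_sum, Matrix.trace_smul,
    smul_smul, smul_eq_mul, Complex.star_def, Finset.mul_sum]
  refine Finset.sum_congr rfl fun i _ => Finset.sum_congr rfl fun j _ => by ring

lemma totalF_eq (H : Matrix (Fin n → Fin 2) (Fin n → Fin 2) ℂ)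
    (P : Fin d → Fin n → Fin 4) (x : (Fin d → ℝ) × (Fin d → ℝ)) :
    totalF H P x =
      (∑ Q ∈ G1 n, (∑ i, ∑ j, ((starRingEnd ℂ) (cfun x i) * cfun x j *
          ((pauliOp (P i))ᴴ * H * pauliOp (P j) * pauliOp Q).trace).re) ^ 2)
      + ∑ Q ∈ G2 P, ((1 / 2 ^ n : ℝ) * ∑ i, ∑ j, ((starRingEnd ℂ) (cfun x i) * cfun x j *
          ((pauliOp (P i))ᴴ * pauliOp (P j) * pauliOp Q).trace).re) ^ 2 := by
  have hK : Kmat P x = ∑ j, cfun x j • pauliOp (P j) := rfl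
  unfold totalF costf phi
  congr 1
  · refine Finset.sum_congr rfl fun Q _ => ?_
    rw [hK, trace_expand, Complex.re_sum]
    simp [Complex.re_sum]
  · refine Finset.sum_congr rfl fun Q _ => ?_
    have h1 : (Kmat P x)ᴴ * Kmat P x * pauliOp Q
        = (Kmat P x)ᴴ * 1 * Kmat P x * pauliOp Q := by rw [Matrix.mul_one]
    rw [h1, hK, trace_expand, Complex.re_sum]
    simp [Complex.re_sum, Matrix.mul_one]

end Stmt16

end Aux
namespace Stmt16
variable {n d : ℕ}

lemma cfun_smul (x : (Fin d → ℝ) × (Fin d → ℝ)) (t : ℝ) (j : Fin d) :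
    cfun (t • x.1, x.2) j = (t : ℂ) * cfun x j := by
  simp [cfun, mul_assoc]

lemma re_scale (t : ℝ) (c₁ c₂ z : ℂ) :
    ((starRingEnd ℂ) ((t : ℂ) * c₁) * ((t : ℂ) * c₂) * z).re
      = t ^ 2 * ((starRingEnd ℂ) c₁ * c₂ * z).re := by
  have : (starRingEnd ℂ) ((t : ℂ) * c₁) * ((t : ℂ) * c₂) * z
      = ((t ^ 2 : ℝ) : ℂ) * ((starRingEnd ℂ) c₁ * c₂ * z) := by
    simp [_root_.map_mul, Complex.conj_ofReal]; ring
  rw [this, Complex.re_ofReal_mul]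

lemma totalF_smul (H : Matrix (Fin n → Fin 2) (Fin n → Fin 2) ℂ)
    (P : Fin d → Fin n → Fin 4) (x : (Fin d → ℝ) × (Fin d → ℝ)) (t : ℝ) :
    totalF H P (t • x.1, x.2) = t ^ 4 * totalF H P x := by
  rw [totalF_eq, totalF_eq, mul_add, Finset.mul_sum, Finset.mul_sum]
  congr 1
  · refine Finset.sum_congr rfl fun Q _ => ?_
    simp only [cfun_smul, re_scale, ← Finset.mul_sum]
    ring
  · refine Finset.sum_congr rfl fun Q _ => ?_
    simp only [cfun_smul, re_scale, ← Finset.mul_sum]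
    ring

lemma diff_term (i j : Fin d) (t : ℂ) :
    Differentiable ℝ (fun x : (Fin d → ℝ) × (Fin d → ℝ) =>
      ((starRingEnd ℂ) (cfun x i) * cfun x j * t).re) := by
  have hc : ∀ k : Fin d, Differentiable ℝ (fun x : (Fin d → ℝ) × (Fin d → ℝ) => cfun x k) := by
    intro k
    have h1 : Differentiable ℝ (fun x : (Fin d → ℝ) × (Fin d → ℝ) => ((x.1 k : ℂ))) :=
      Complex.ofRealCLM.differentiable.comp (by fun_prop)
    have h2 : Differentiable ℝ (fun x : (Fin d → ℝ) × (Fin d → ℝ) => ((x.2 k : ℂ))) :=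
      Complex.ofRealCLM.differentiable.comp (by fun_prop)
    have h3 : Differentiable ℝ (fun x : (Fin d → ℝ) × (Fin d → ℝ) =>
        Complex.exp (Complex.I * (x.2 k : ℂ))) :=
      ((Complex.differentiable_exp (𝕜 := ℂ)).restrictScalars ℝ).comp (h2.const_mul Complex.I)
    exact h1.mul h3
  have hconj : Differentiable ℝ (fun x : (Fin d → ℝ) × (Fin d → ℝ) => (starRingEnd ℂ) (cfun x i)) :=
    Complex.conjCLE.differentiable.comp (hc i)
  exact Complex.reCLM.differentiable.comp ((hconj.mul (hc j)).mul_const t)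

lemma diff_totalF (H : Matrix (Fin n → Fin 2) (Fin n → Fin 2) ℂ)
    (P : Fin d → Fin n → Fin 4) : Differentiable ℝ (totalF H P) := by
  have : totalF H P = fun x =>
      (∑ Q ∈ G1 n, (∑ i, ∑ j, ((starRingEnd ℂ) (cfun x i) * cfun x j *
          ((pauliOp (P i))ᴴ * H * pauliOp (P j) * pauliOp Q).trace).re) ^ 2)
      + ∑ Q ∈ G2 P, ((1 / 2 ^ n : ℝ) * ∑ i, ∑ j, ((starRingEnd ℂ) (cfun x i) * cfun x j *
          ((pauliOp (P i))ᴴ * pauliOp (P j) * pauliOp Q).trace).re) ^ 2 :=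
    funext (totalF_eq H P)
  rw [this]
  apply Differentiable.add
  · exact Differentiable.fun_sum fun Q _ =>
      (Differentiable.fun_sum fun i _ => Differentiable.fun_sum fun j _ => diff_term i j _).pow 2
  · exact Differentiable.fun_sum fun Q _ =>
      ((Differentiable.fun_sum fun i _ => Differentiable.fun_sum fun j _ => diff_term i j _).const_mul _).pow 2

lemma totalF_nonneg (H : Matrix (Fin n → Fin 2) (Fin n → Fin 2) ℂ)
    (P : Fin d → Fin n → Fin 4) (x : (Fin d → ℝ) × (Fin d → ℝ)) :
    0 ≤ totalF H P x :=
  add_nonneg (Finset.sum_nonneg fun _ _ => sq_nonneg _) (Finset.sum_nonneg fun _ _ => sq_nonneg _)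

end Stmt16
/-- if `‖r‖ = 1`, then `‖∇_r F(r,θ)‖ ≥ 4 F(r,θ)`, where the `j`-th component
of `∇_r F` is the partial derivative of `F` in the direction of the `j`-th radial
coordinate. -/
theorem statement16 {n d : ℕ} (hn : 1 ≤ n)
    (H : Matrix (Fin n → Fin 2) (Fin n → Fin 2) ℂ) (hH : H.IsHermitian)
    (P : Fin d → Fin n → Fin 4) (hP : Function.Injective P)
    (x : (Fin d → ℝ) × (Fin d → ℝ)) (hx : ∑ j, x.1 j ^ 2 = 1) :
    4 * totalF H P x ≤
      Real.sqrt (∑ j, (fderiv ℝ (totalF H P) x (Pi.single j 1, 0)) ^ 2) := by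
  classical
  set F := totalF H P with hFdef
  set v : (Fin d → ℝ) × (Fin d → ℝ) := (x.1, 0) with hvdef
  have hdiff := Stmt16.diff_totalF H P
  have hF : HasFDerivAt F (fderiv ℝ F x) x := (hdiff x).hasFDerivAt
  have hγ : HasDerivAt (fun t : ℝ => x + t • v) v 0 := by
    simpa using ((hasDerivAt_id (0 : ℝ)).smul_const v).const_add x
  have hF' : HasFDerivAt F (fderiv ℝ F x) ((fun t : ℝ => x + t • v) 0) := by
    simpa using hF
  have hcomp : HasDerivAt (fun t : ℝ => F (x + t • v)) (fderiv ℝ F x v) 0 :=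
    (hF'.comp_hasDerivAt 0 hγ :)
  have heq : (fun t : ℝ => F (x + t • v)) = fun t => (1 + t) ^ 4 * F x := by
    funext t
    have hxv : x + t • v = ((1 + t) • x.1, x.2) := by
      refine Prod.ext ?_ ?_
      · show x.1 + t • x.1 = (1 + t) • x.1
        rw [add_smul, one_smul]
      · show x.2 + t • (0 : Fin d → ℝ) = x.2
        simp
    rw [hxv, hFdef]
    exact Stmt16.totalF_smul H P x (1 + t)
  have hcomp2 : HasDerivAt (fun t : ℝ => F (x + t • v)) (4 * F x) 0 := by
    rw [heq]
    have h := (((hasDerivAt_id (0 : ℝ)).const_add 1).pow 4).mul_const (F x)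
    norm_num at h
    exact h
  have hEuler : fderiv ℝ F x v = 4 * F x := hcomp.unique hcomp2
  have hv : v = ∑ j, x.1 j • ((Pi.single j 1 : Fin d → ℝ), (0 : Fin d → ℝ)) := by
    refine Prod.ext ?_ ?_
    · rw [Prod.fst_sum]
      funext k
      simp [Finset.sum_apply, Pi.single_apply, Finset.sum_ite_eq]
      rfl
    · rw [Prod.snd_sum]
      simp
      rfl
  have hlin : fderiv ℝ F x v = ∑ j, x.1 j * fderiv ℝ F x (Pi.single j 1, 0) := by
    rw [hv, map_sum]
    exact Finset.sum_congr rfl fun j _ => by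
      rw [ContinuousLinearMap.map_smul]; rfl
  have key : 4 * F x = ∑ j, x.1 j * fderiv ℝ F x (Pi.single j 1, 0) := by
    rw [← hlin, hEuler]
  rw [key]
  calc ∑ j, x.1 j * fderiv ℝ F x (Pi.single j 1, 0)
      ≤ Real.sqrt (∑ j, x.1 j ^ 2) * Real.sqrt (∑ j, (fderiv ℝ F x (Pi.single j 1, 0)) ^ 2) :=
        Real.sum_mul_le_sqrt_mul_sqrt _ _ _
    _ = Real.sqrt (∑ j, (fderiv ℝ F x (Pi.single j 1, 0)) ^ 2) := by
        rw [hx, Real.sqrt_one, one_mul]
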